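/- Let α₅ := (1/6)·(8 − 20/(9√201 − 91)^{1/3} + (9√201 − 91)^{1/3}). Then 3/4 < α₅ < 1, and for every real α with 3/4 < α < 1 one has 4 − 3/α ≤ (4 − 4α²)/(5 − 4α) if and only if α ≤ α₅; in particular 4 − 3/α₅ = (4 − 4α₅²)/(5 − 4α₅). (This is the statement that α_*(5) = α₅ for m(α,5) = min{(4−4α²)/(5−4α), 4 − 3/α}.) -/
import Mathlib


/-- The constant `α_*(5) = (1/6)·(8 − 20/(9√201 − 91)^{1/3} + (9√201 − 91)^{1/3})`. -/
noncomputable def alphaStar5 : ℝ :=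
  (1 / 6) * (8 - 20 / (9 * Real.sqrt 201 - 91) ^ ((1 : ℝ) / 3)
    + (9 * Real.sqrt 201 - 91) ^ ((1 : ℝ) / 3))

lemma base_pos : (0:ℝ) < 9 * Real.sqrt 201 - 91 := by
  have h : (91/9 : ℝ) < Real.sqrt 201 := by
    rw [show (91/9 : ℝ) = Real.sqrt ((91/9)^2) from (Real.sqrt_sq (by norm_num)).symm]
    exact Real.sqrt_lt_sqrt (by positivity) (by norm_num)
  linarith

lemma c_pos : (0:ℝ) < (9 * Real.sqrt 201 - 91) ^ ((1 : ℝ) / 3) :=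
  Real.rpow_pos_of_pos base_pos _

lemma c_cube : ((9 * Real.sqrt 201 - 91) ^ ((1 : ℝ) / 3)) ^ 3
    = 9 * Real.sqrt 201 - 91 := by
  rw [← Real.rpow_natCast (((9 * Real.sqrt 201 - 91) ^ ((1 : ℝ) / 3))) 3,
    ← Real.rpow_mul base_pos.le]
  norm_num

lemma cubic_root : 4 * alphaStar5 ^ 3 - 16 * alphaStar5 ^ 2 + 28 * alphaStar5 - 15 = 0 := by
  set c := (9 * Real.sqrt 201 - 91) ^ ((1 : ℝ) / 3) with hc
  have hc0 : c ≠ 0 := c_pos.ne'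
  have h3 : c ^ 3 = 9 * Real.sqrt 201 - 91 := c_cube
  have hs : Real.sqrt 201 ^ 2 = 201 := Real.sq_sqrt (by norm_num)
  have ha : alphaStar5 = (1 / 6) * (8 - 20 / c + c) := rfl
  have key0 : 4 * c ^ 6 + 728 * c ^ 3 - 32000 = 0 := by
    have h6 : c ^ 6 = (9 * Real.sqrt 201 - 91) ^ 2 := by rw [← h3]; ring
    rw [h3, h6]
    linear_combination 324 * hs
  have expand : 4 * alphaStar5 ^ 3 - 16 * alphaStar5 ^ 2 + 28 * alphaStar5 - 15
      = (4 * c ^ 6 + 728 * c ^ 3 - 32000) / (216 * c ^ 3) := by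
    rw [ha]; field_simp; ring
  rw [expand, key0]; simp

lemma mono_le (x y : ℝ) (h : x ≤ y) :
    4 * x ^ 3 - 16 * x ^ 2 + 28 * x ≤ 4 * y ^ 3 - 16 * y ^ 2 + 28 * y := by
  nlinarith [sq_nonneg (x + y - 8/3), sq_nonneg (x - y), sq_nonneg (x + y),
    mul_nonneg (sub_nonneg.2 h) (sq_nonneg (x + y - 8/3)),
    mul_nonneg (sub_nonneg.2 h) (sq_nonneg (x - y))]

lemma mono_lt (x y : ℝ) (h : x < y) :
    4 * x ^ 3 - 16 * x ^ 2 + 28 * x < 4 * y ^ 3 - 16 * y ^ 2 + 28 * y := by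
  nlinarith [sq_nonneg (x + y - 8/3), sq_nonneg (x - y),
    mul_nonneg (sub_nonneg.2 h.le) (sq_nonneg (x + y - 8/3)),
    mul_nonneg (sub_nonneg.2 h.le) (sq_nonneg (x - y))]

/-- `3/4 < α₅ < 1`, and for every real `α` with `3/4 < α < 1` one has
`4 − 3/α ≤ (4 − 4α²)/(5 − 4α)` if and only if `α ≤ α₅`; in particular
`4 − 3/α₅ = (4 − 4α₅²)/(5 − 4α₅)`. This is the statement `α_*(5) = α₅`. -/
theorem statement5 :
    (3 / 4 < alphaStar5 ∧ alphaStar5 < 1) ∧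
    (∀ α : ℝ, 3 / 4 < α → α < 1 →
      (4 - 3 / α ≤ (4 - 4 * α ^ 2) / (5 - 4 * α) ↔ α ≤ alphaStar5)) ∧
    4 - 3 / alphaStar5 = (4 - 4 * alphaStar5 ^ 2) / (5 - 4 * alphaStar5) := by
  have hP := cubic_root
  have h34 : 3 / 4 < alphaStar5 := by
    by_contra h
    push_neg at h
    have := mono_le alphaStar5 (3/4) h
    norm_num at this
    linarith
  have h1 : alphaStar5 < 1 := by
    by_contra h
    push_neg at h
    have := mono_le 1 alphaStar5 h
    norm_num at this
    linarith
  refine ⟨⟨h34, h1⟩, ?_, ?_⟩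
  · intro α hα34 hα1
    have hα0 : 0 < α := by linarith
    have hd : 0 < 5 - 4 * α := by linarith
    have key : (4 - 3 / α ≤ (4 - 4 * α ^ 2) / (5 - 4 * α)) ↔
        4 * α ^ 3 - 16 * α ^ 2 + 28 * α - 15 ≤ 0 := by
      have e1 : 4 - 3 / α = (4 * α - 3) / α := by field_simp
      rw [e1, div_le_div_iff₀ hα0 hd]
      constructor <;> intro h <;> nlinarith
    rw [key]
    constructor
    · intro h
      by_contra hlt
      push_neg at hlt
      have := mono_lt alphaStar5 α hlt
      linarith
    · intro h
      have := mono_le α alphaStar5 h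
      linarith
  · have h0 : alphaStar5 ≠ 0 := by linarith
    have hd : (5 - 4 * alphaStar5) ≠ 0 := by linarith
    field_simp
    linear_combination hP
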